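/- arXiv:1002.3150 — 4 statements merged into one kernel-verified Lean document; each statement's English description precedes it below -/
import Mathlib

section
/- Let A be a commutative ring, M a free A-module of finite rank, N an A-module, and {N_λ}_{λ∈Λ} a family of A-submodules of N. Then, identifying each N_λ ⊗_A M with its image in N ⊗_A M (the maps N_λ ⊗_A M → N ⊗_A M are injective since M is flat), one has the equality of submodules of N ⊗_A M: the image of (⋂_{λ∈Λ} N_λ) ⊗_A M equals ⋂_{λ∈Λ} (image of N_λ ⊗_A M). -/
open TensorProduct

lemma range_aux (A : Type*) [CommRing A]
    (M : Type*) [AddCommGroup M] [Module A M]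
    (N : Type*) [AddCommGroup N] [Module A N]
    {ι : Type*} [DecidableEq ι] (b : Module.Basis ι A M) (p : Submodule A N) :
    LinearMap.range (TensorProduct.map p.subtype (LinearMap.id : M →ₗ[A] M))
      = ⨅ i, Submodule.comap
          ((Finsupp.lapply i).comp
            ((LinearEquiv.lTensor N b.repr ≪≫ₗ
              TensorProduct.finsuppScalarRight A A N ι) : N ⊗[A] M →ₗ[A] (ι →₀ N))) p := by
  set e : N ⊗[A] M ≃ₗ[A] (ι →₀ N) :=
    LinearEquiv.lTensor N b.repr ≪≫ₗ TensorProduct.finsuppScalarRight A A N ι with he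
  apply le_antisymm
  · rintro x ⟨y, rfl⟩
    rw [Submodule.mem_iInf]
    intro i
    simp only [Submodule.mem_comap, LinearMap.coe_comp, Function.comp_apply,
      LinearEquiv.coe_coe]
    induction y using TensorProduct.induction_on with
    | zero => simp
    | tmul n m =>
        simp only [TensorProduct.map_tmul, LinearMap.id_coe, id_eq, he, Finsupp.lapply_apply,
          LinearEquiv.trans_apply, LinearEquiv.lTensor_tmul,
          TensorProduct.finsuppScalarRight_apply_tmul_apply]
        exact p.smul_mem _ n.2
    | add u v hu hv => simpa using p.add_mem hu hv
  · intro x hx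
    rw [Submodule.mem_iInf] at hx
    have : x = e.symm (e x) := (e.symm_apply_apply x).symm
    rw [this, ← Finsupp.sum_single (e x), map_finsuppSum]
    apply Submodule.sum_mem
    intro i _
    have hi : e x i ∈ p := by
      simpa [Submodule.mem_comap] using hx i
    refine ⟨(⟨e x i, hi⟩ : p) ⊗ₜ[A] b i, ?_⟩
    simp only [TensorProduct.map_tmul, LinearMap.id_coe, id_eq, Submodule.coe_subtype, he,
      LinearEquiv.trans_symm, LinearEquiv.trans_apply,
      TensorProduct.finsuppScalarRight_symm_apply_single, LinearEquiv.lTensor_symm_tmul]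
    simp

/-- Let `A` be a commutative ring, `M` a free `A`-module of finite rank,
`N` an `A`-module, and `{N_λ}_{λ ∈ Λ}` a family of `A`-submodules of `N`. Identifying each
`N_λ ⊗[A] M` with its image in `N ⊗[A] M` (via the canonical map `N_λ ⊗ M → N ⊗ M` induced
by the inclusion `N_λ ↪ N`, which is injective since `M` is flat), the image of
`(⋂_λ N_λ) ⊗[A] M` in `N ⊗[A] M` equals the intersection of the images of the
`N_λ ⊗[A] M` in `N ⊗[A] M`. -/
theorem intersection_tensor_free_finite_rank
    (A : Type*) [CommRing A]
    (M : Type*) [AddCommGroup M] [Module A M] [Module.Free A M] [Module.Finite A M]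
    (N : Type*) [AddCommGroup N] [Module A N]
    {Λ : Type*} (Nf : Λ → Submodule A N) :
    LinearMap.range
        (TensorProduct.map (⨅ l, Nf l : Submodule A N).subtype (LinearMap.id : M →ₗ[A] M))
      = ⨅ l, LinearMap.range
        (TensorProduct.map (Nf l).subtype (LinearMap.id : M →ₗ[A] M)) := by
  classical
  let b := Module.Free.chooseBasis A M
  simp_rw [range_aux A M N b, Submodule.comap_iInf]
  rw [iInf_comm]
end

section
/- Let G be a group, R a noetherian integral domain with fraction field K, and L a free R-module of finite rank d ≥ 1 equipped with an R-linear action of G (a representation ρ_L : G → Aut_R(L)); set V := L ⊗_R K with the induced representation ρ_V of G. Suppose there exists a set S of prime ideals of R such that (i) ⋂_{p∈S} p = (0), and (ii) for every p ∈ S the reduced representation ρ̄_{L,p} of G on the κ(p)-vector space L ⊗_R κ(p) is irreducible, where κ(p) = R_p/pR_p is the residue field of the localization R_p. Then ρ_V is irreducible, i.e., V has no G-invariant K-subspace other than 0 and V. -/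
open TensorProduct

set_option maxHeartbeats 1000000
set_option synthInstance.maxHeartbeats 200000

lemma one_tmul_eq_zero_iff' {R : Type*} [CommRing R] {L : Type*} [AddCommGroup L] [Module R L]
    {ι : Type*} (b : Module.Basis ι R L) (C : Type*) [CommRing C] [Algebra R C]
    (x : L) : (1 : C) ⊗ₜ[R] x = 0 ↔ ∀ i, algebraMap R C (b.repr x i) = 0 := by
  rw [← map_eq_zero_iff (b.baseChange C).repr (b.baseChange C).repr.injective]
  constructor
  · intro h i
    have := DFunLike.congr_fun h i
    simpa [Algebra.smul_def] using this
  · intro h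
    ext i
    simpa [Algebra.smul_def] using h i

/-- If `1 ⊗ x` vanishes in `κ(p) ⊗ L` then all coordinates of `x` lie in `p`. -/
lemma coord_mem_of_tmul_residue_eq_zero {R : Type*} [CommRing R] {L : Type*} [AddCommGroup L]
    [Module R L] {ι : Type*} (b : Module.Basis ι R L) (p : Ideal R) [p.IsPrime] (x : L)
    (h : (1 : IsLocalRing.ResidueField (Localization.AtPrime p)) ⊗ₜ[R] x = 0) (i : ι) :
    b.repr x i ∈ p := by
  have h0 := (one_tmul_eq_zero_iff' b _ x).mp h i
  rw [IsScalarTower.algebraMap_apply R (Localization.AtPrime p)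
    (IsLocalRing.ResidueField (Localization.AtPrime p)),
    IsLocalRing.ResidueField.algebraMap_eq] at h0
  have hmax : algebraMap R (Localization.AtPrime p) (b.repr x i)
      ∈ IsLocalRing.maximalIdeal (Localization.AtPrime p) :=
    Ideal.Quotient.eq_zero_iff_mem.mp h0
  have : b.repr x i ∈ Ideal.comap (algebraMap R (Localization.AtPrime p))
      (IsLocalRing.maximalIdeal (Localization.AtPrime p)) := hmax
  rwa [← Ideal.under_def, Localization.AtPrime.comap_maximalIdeal] at this

/-- Nakayama step: if the image of `M` spans `κ(p) ⊗ L`, then every `x : L` can be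
multiplied into `M` by some `s ∉ p`. -/
lemma exists_smul_mem_of_span_residue_eq_top {R : Type*} [CommRing R] [IsDomain R]
    {L : Type*} [AddCommGroup L] [Module R L] [Module.Free R L] [Module.Finite R L]
    {ι : Type*} (b : Module.Basis ι R L) [Fintype ι]
    (p : Ideal R) [p.IsPrime] (M : Submodule R L)
    (htop : Submodule.span (IsLocalRing.ResidueField (Localization.AtPrime p))
      ((TensorProduct.mk R (IsLocalRing.ResidueField (Localization.AtPrime p)) L 1) '' M) = ⊤)
    (x : L) : ∃ s : p.primeCompl, (s : R) • x ∈ M := by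
  classical
  set A := Localization.AtPrime p
  have hMAtop : Submodule.span A ((TensorProduct.mk R A L 1) '' M) = ⊤ := by
    rw [← IsLocalRing.map_tensorProduct_mk_eq_top, Submodule.map_span, Set.image_image]
    have himg : (fun m' => (TensorProduct.mk A (IsLocalRing.ResidueField A) (A ⊗[R] L) 1)
          ((TensorProduct.mk R A L 1) m')) '' M
        = (AlgebraTensorModule.cancelBaseChange R A (IsLocalRing.ResidueField A)
            (IsLocalRing.ResidueField A) L).symm ''
          ((TensorProduct.mk R (IsLocalRing.ResidueField A) L 1) '' M) := by
      rw [Set.image_image]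
      refine Set.image_congr fun m' _ => ?_
      simp [AlgebraTensorModule.cancelBaseChange_symm_tmul]
    have hsurj : Function.Surjective (algebraMap A (IsLocalRing.ResidueField A)) := by
      rw [IsLocalRing.ResidueField.algebraMap_eq]
      exact IsLocalRing.residue_surjective
    rw [himg, eq_top_iff]
    rintro z -
    set e := AlgebraTensorModule.cancelBaseChange R A (IsLocalRing.ResidueField A)
      (IsLocalRing.ResidueField A) L with he
    set s := (TensorProduct.mk R (IsLocalRing.ResidueField A) L 1) '' M with hs
    have hz : e z ∈ Submodule.span (IsLocalRing.ResidueField A) s := by rw [htop]; trivial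
    have key : ∀ w ∈ Submodule.span (IsLocalRing.ResidueField A) s,
        e.symm w ∈ Submodule.span A (⇑e.symm '' s) := by
      intro w hw
      induction hw using Submodule.span_induction with
      | mem y hy => exact Submodule.subset_span ⟨y, hy, rfl⟩
      | zero => rw [map_zero]; exact Submodule.zero_mem _
      | add u v _ _ ihu ihv => rw [map_add]; exact Submodule.add_mem _ ihu ihv
      | smul c u _ ihu =>
          obtain ⟨a, rfl⟩ := hsurj c
          rw [map_smul, algebraMap_smul]
          exact Submodule.smul_mem _ _ ihu
    have hfin := key (e z) hz
    rwa [LinearEquiv.symm_apply_apply] at hfin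
  have hy : (TensorProduct.mk R A L 1) x ∈ Submodule.span A ((TensorProduct.mk R A L 1) '' M) := by
    rw [hMAtop]; trivial
  rw [Submodule.mem_span_set'] at hy
  obtain ⟨n, cA, v, hv⟩ := hy
  choose mm hmmM hmmv using fun j => (v j).2
  obtain ⟨s, hs⟩ := IsLocalization.exist_integer_multiples_of_finite p.primeCompl cA
  choose r hr using hs
  refine ⟨s, ?_⟩
  have hzero : (TensorProduct.mk R A L 1) ((s : R) • x - ∑ j, r j • mm j) = 0 := by
    rw [map_sub, map_smul, map_sum]
    have h1 : (s : R) • (TensorProduct.mk R A L 1) x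
        = ∑ j, r j • (TensorProduct.mk R A L 1) (mm j) := by
      rw [← hv, Finset.smul_sum]
      refine Finset.sum_congr rfl fun j _ => ?_
      rw [hmmv j, ← smul_assoc, ← algebraMap_smul A (r j) ((v j : A ⊗[R] L)), ← hr j]
    rw [h1, sub_eq_zero]
    exact Finset.sum_congr rfl fun j _ => (map_smul _ _ _).symm
  have hAinj : Function.Injective (algebraMap R A) :=
    IsLocalization.injective A p.primeCompl_le_nonZeroDivisors
  have heq : (s : R) • x - ∑ j, r j • mm j = 0 := by
    have hker := (one_tmul_eq_zero_iff' b A _).mp (by simpa using hzero)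
    have hrepr : b.repr ((s : R) • x - ∑ j, r j • mm j) = 0 := by
      ext i'
      have h2 := hker i'
      rw [← map_zero (algebraMap R A)] at h2
      simpa using hAinj h2
    simpa using (b.repr.map_eq_zero_iff).mp hrepr
  rw [sub_eq_zero] at heq
  rw [heq]
  exact Submodule.sum_mem _ fun j _ => Submodule.smul_mem _ _ (hmmM j)



/-- For a representation `ρ` of a group `G` on an `R`-module `L` and a prime ideal `p` of
`R`, this says that the reduction of `ρ` at `p`, i.e. the induced representation of `G` on
the `κ(p)`-vector space `κ(p) ⊗[R] L` — where `κ(p) = R_p/pR_p` is the residue field of the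
localization `R_p` — is irreducible: its only `G`-invariant `κ(p)`-subspaces are `0` and
the whole space. -/
def IsResiduallyIrreducible {R L G : Type*} [CommRing R] [AddCommGroup L] [Module R L]
    [Group G] (ρ : Representation R G L) (p : Ideal R) (hp : p.IsPrime) : Prop :=
  letI := hp
  ∀ W : Submodule (IsLocalRing.ResidueField (Localization.AtPrime p))
      (TensorProduct R (IsLocalRing.ResidueField (Localization.AtPrime p)) L),
    (∀ g : G, ∀ x ∈ W,
        LinearMap.baseChange (IsLocalRing.ResidueField (Localization.AtPrime p)) (ρ g) x ∈ W) →
    W = ⊥ ∨ W = ⊤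

/-- the irreducibility criterion, Theorem 3.3 of the paper. Let `G` be a
group, `R` a noetherian integral domain with fraction field `K`, and `L` a free `R`-module
of finite rank `d ≥ 1` with a representation `ρ : G → Aut_R(L)`; set `V := K ⊗_R L` with
the induced representation `ρ_V`. If there is a set `S` of prime ideals of `R` with
`⋂_{p ∈ S} p = (0)` such that the reduction of `ρ` at every `p ∈ S` is irreducible, then
`ρ_V` is irreducible: `V` has no `G`-invariant `K`-subspace other than `0` and `V`. -/
theorem repn_irreducible_of_residually_irreducible_family
    (G : Type*) [Group G]
    (R : Type*) [CommRing R] [IsDomain R] [IsNoetherianRing R]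
    (K : Type*) [Field K] [Algebra R K] [IsFractionRing R K]
    (L : Type*) [AddCommGroup L] [Module R L] [Module.Free R L] [Module.Finite R L]
    [Nontrivial L]
    (ρ : Representation R G L)
    (S : Set (Ideal R))
    (hSprime : ∀ p ∈ S, p.IsPrime)
    (hSint : sInf S = ⊥)
    (hSirr : ∀ p ∈ S, ∀ hp : p.IsPrime, IsResiduallyIrreducible ρ p hp) :
    ∀ W : Submodule K (TensorProduct R K L),
      (∀ g : G, ∀ x ∈ W, LinearMap.baseChange K (ρ g) x ∈ W) → W = ⊥ ∨ W = ⊤ := by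
  intro W hW
  classical
  set b := Module.Free.chooseBasis R L with hb
  set f : L →ₗ[R] K ⊗[R] L := TensorProduct.mk R K L 1 with hf
  set M : Submodule R L := (W.restrictScalars R).comap f with hMdef
  -- saturation of M
  have hsat : ∀ (s : R), s ≠ 0 → ∀ x : L, s • x ∈ M → x ∈ M := by
    intro s hs x hx
    have h1 : s • f x ∈ W := by
      have h0 : f (s • x) ∈ W := hx
      rwa [map_smul] at h0
    have hs' : algebraMap R K s ≠ 0 := by
      simpa using (map_ne_zero_iff _ (IsFractionRing.injective R K)).mpr hs
    rw [← algebraMap_smul K s (f x)] at h1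
    have h2 := W.smul_mem (algebraMap R K s)⁻¹ h1
    rw [inv_smul_smul₀ hs'] at h2
    simpa [hMdef] using h2
  -- W is spanned by f '' M
  have hspan : W = Submodule.span K (f '' M) := by
    apply le_antisymm
    · intro w hw
      set bK := b.baseChange K with hbK
      obtain ⟨c, hc⟩ := IsLocalization.exist_integer_multiples_of_finite
        (nonZeroDivisors R) (fun i => bK.repr w i)
      choose r hr using hc
      set m : L := ∑ i, r i • b i with hm
      have hfm : f m = (c : R) • w := by
        rw [hm, map_sum]
        conv_rhs => rw [← bK.sum_repr w, Finset.smul_sum]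
        refine Finset.sum_congr rfl fun i _ => ?_
        have : f (r i • b i) = (algebraMap R K (r i)) • bK i := by
          simp [hf, hbK, TensorProduct.mk_apply, algebraMap_smul]
        rw [this, hr i, smul_assoc]
      have hmM : m ∈ M := by
        have : (c : R) • w ∈ W := by
          rw [← algebraMap_smul K (c : R) w]
          exact W.smul_mem _ hw
        simp [hMdef, Submodule.mem_comap, hfm, this]
      have hc0 : algebraMap R K (c : R) ≠ 0 := by
        simpa using (map_ne_zero_iff _ (IsFractionRing.injective R K)).mpr
          (nonZeroDivisors.coe_ne_zero c)
      have : w = (algebraMap R K (c : R))⁻¹ • f m := by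
        rw [hfm, ← algebraMap_smul K (c : R) w, inv_smul_smul₀ hc0]
      rw [this]
      exact Submodule.smul_mem _ _ (Submodule.subset_span ⟨m, hmM, rfl⟩)
    · rw [Submodule.span_le]
      rintro _ ⟨x, hx, rfl⟩
      simpa [hMdef] using hx
  -- M is G-stable
  have hMinv : ∀ g : G, ∀ x ∈ M, ρ g x ∈ M := by
    intro g x hx
    have h1 : LinearMap.baseChange K (ρ g) (f x) ∈ W := hW g _ (by simpa [hMdef] using hx)
    simp only [hf, TensorProduct.mk_apply, LinearMap.baseChange_tmul] at h1
    simpa [hMdef, hf] using h1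
  by_cases hMtop : M = ⊤
  · right
    rw [hspan, hMtop, eq_top_iff]
    rintro z -
    induction z using TensorProduct.induction_on with
    | zero => exact Submodule.zero_mem _
    | tmul k x =>
        have : (k : K) ⊗ₜ[R] x = k • f x := by
          rw [hf]
          simp only [TensorProduct.mk_apply, smul_tmul', smul_eq_mul, mul_one]
        rw [this]
        exact Submodule.smul_mem _ _ (Submodule.subset_span ⟨x, trivial, rfl⟩)
    | add u v hu hv => exact Submodule.add_mem _ hu hv
  · left
    have hM0 : M = ⊥ := by
      rw [eq_bot_iff]
      intro x hx
      rw [Submodule.mem_bot]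
      have hcoord : ∀ i, b.repr x i = 0 := by
        intro i
        have hmem : b.repr x i ∈ sInf S := by
          rw [Submodule.mem_sInf]
          intro p hpS
          haveI hprime : Ideal.IsPrime p := hSprime p hpS
          have hWpinv : ∀ g : G, ∀ y ∈ Submodule.span
              (IsLocalRing.ResidueField (Localization.AtPrime p))
              ((TensorProduct.mk R (IsLocalRing.ResidueField (Localization.AtPrime p)) L 1)
                '' M),
              LinearMap.baseChange (IsLocalRing.ResidueField (Localization.AtPrime p)) (ρ g) y
                ∈ Submodule.span (IsLocalRing.ResidueField (Localization.AtPrime p))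
                  ((TensorProduct.mk R (IsLocalRing.ResidueField (Localization.AtPrime p)) L 1)
                    '' M) := by
            intro g y hy
            induction hy using Submodule.span_induction with
            | mem z hz =>
                obtain ⟨m', hm', rfl⟩ := hz
                exact Submodule.subset_span
                  ⟨ρ g m', hMinv g m' hm', by simp [LinearMap.baseChange_tmul]⟩
            | zero => simp
            | add u v hu hv ihu ihv => rw [map_add]; exact Submodule.add_mem _ ihu ihv
            | smul c u hu ihu => rw [map_smul]; exact Submodule.smul_mem _ _ ihu
          rcases hSirr p hpS hprime _ hWpinv with hbot | htop
          · refine coord_mem_of_tmul_residue_eq_zero b p x ?_ i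
            have hmem2 : (TensorProduct.mk R
                (IsLocalRing.ResidueField (Localization.AtPrime p)) L 1) x
                ∈ Submodule.span (IsLocalRing.ResidueField (Localization.AtPrime p))
                  ((TensorProduct.mk R (IsLocalRing.ResidueField (Localization.AtPrime p)) L 1)
                    '' M) := Submodule.subset_span ⟨x, hx, rfl⟩
            rw [hbot] at hmem2
            simpa using hmem2
          · exfalso
            apply hMtop
            rw [eq_top_iff]
            rintro y -
            obtain ⟨s, hs⟩ := exists_smul_mem_of_span_residue_eq_top b p M htop y
            have hs0 : (s : R) ≠ 0 := fun h => s.2 (h ▸ p.zero_mem)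
            exact hsat (s : R) hs0 y hs
        rw [hSint] at hmem
        simpa using hmem
      have hr0 : b.repr x = 0 := Finsupp.ext hcoord
      simpa using (b.repr.map_eq_zero_iff).mp hr0
    rw [hspan, hM0]
    simp
end

section
/- Let G be a group, R a noetherian integral domain with fraction field K, and L a free R-module of finite rank d ≥ 1 with a representation ρ_L : G → Aut_R(L); set V := L ⊗_R K with the induced representation ρ_V. If the reduced representation ρ̄_{L,p} of G on L ⊗_R κ(p) is irreducible for infinitely many prime ideals p of R of height 1, then ρ_V is irreducible. -/
set_option maxHeartbeats 2000000 in
/-- Corollary 3.6 of the paper. Let `G` be a group, `R` a noetherian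
integral domain with fraction field `K`, and `L` a free `R`-module of finite rank `d ≥ 1`
with a representation `ρ : G → Aut_R(L)`; set `V := K ⊗_R L` with the induced
representation `ρ_V`. If the reduction of `ρ` at `p` is irreducible for infinitely many
prime ideals `p` of `R` of height `1` (i.e. `p ≠ 0` and the only prime ideal strictly
contained in `p` is the zero ideal), then `ρ_V` is irreducible. -/
theorem repn_irreducible_of_infinitely_many_height_one_residually_irreducible
    (G : Type*) [Group G]
    (R : Type*) [CommRing R] [IsDomain R] [IsNoetherianRing R]
    (K : Type*) [Field K] [Algebra R K] [IsFractionRing R K]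
    (L : Type*) [AddCommGroup L] [Module R L] [Module.Free R L] [Module.Finite R L]
    [Nontrivial L]
    (ρ : Representation R G L)
    (hinf : {p : Ideal R | ∃ hp : p.IsPrime, p ≠ ⊥ ∧
        (∀ q : Ideal R, q.IsPrime → q < p → q = ⊥) ∧
        IsResiduallyIrreducible ρ p hp}.Infinite) :
    ∀ W : Submodule K (TensorProduct R K L),
      (∀ g : G, ∀ x ∈ W, LinearMap.baseChange K (ρ g) x ∈ W) → W = ⊥ ∨ W = ⊤ := by
  classical
  intro W hW
  by_contra hcon
  rw [not_or] at hcon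
  obtain ⟨hWbot, hWtop⟩ := hcon
  set φ : L →ₗ[R] TensorProduct R K L := TensorProduct.mk R K L 1 with hφdef
  haveI hlocmod : IsLocalizedModule (nonZeroDivisors R) φ :=
    (isLocalizedModule_iff_isBaseChange (nonZeroDivisors R) K φ).mpr
      (TensorProduct.isBaseChange R L K)
  set M : Submodule R L := (W.restrictScalars R).comap φ with hMdef
  have halg : ∀ r : R, r ≠ 0 → algebraMap R K r ≠ 0 := fun r hr h =>
    hr (IsFractionRing.injective R K (by simpa using h))
  -- saturation of M
  have hsat : ∀ (r : R), r ≠ 0 → ∀ x : L, r • x ∈ M → x ∈ M := by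
    intro r hr x hx
    have h1 : (algebraMap R K r) • φ x ∈ W := by
      have : φ (r • x) ∈ W := hx
      rwa [map_smul, ← algebraMap_smul K r (φ x)] at this
    have h2 : φ x ∈ W := by
      have := W.smul_mem (algebraMap R K r)⁻¹ h1
      rwa [inv_smul_smul₀ (halg r hr)] at this
    exact h2
  -- G-invariance of M
  have hMinv : ∀ g y, y ∈ M → ρ g y ∈ M := by
    intro g y hy
    have h1 : LinearMap.baseChange K (ρ g) (φ y) ∈ W := hW g (φ y) hy
    have h2 : LinearMap.baseChange K (ρ g) (φ y) = φ (ρ g y) := by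
      simp [hφdef]
    show φ (ρ g y) ∈ W
    rwa [h2] at h1
  -- a nonzero element of M
  obtain ⟨w, hwW, hw0⟩ := (Submodule.ne_bot_iff W).mp hWbot
  obtain ⟨⟨m, s⟩, hs⟩ := IsLocalizedModule.surj (nonZeroDivisors R) φ w
  have hsK : algebraMap R K (s : R) ≠ 0 := halg _ (nonZeroDivisors.coe_ne_zero s)
  have hmM : m ∈ M := by
    show φ m ∈ W
    rw [← hs, Submonoid.smul_def, ← algebraMap_smul K (s : R) w]
    exact W.smul_mem _ hwW
  have hm0 : m ≠ 0 := by
    rintro rfl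
    rw [map_zero] at hs
    rw [Submonoid.smul_def, ← algebraMap_smul K (s : R) w] at hs
    exact hw0 ((smul_eq_zero.mp hs).resolve_left hsK)
  -- M ≠ ⊤
  have hMtop : M ≠ ⊤ := by
    intro h
    apply hWtop
    rw [Submodule.eq_top_iff']
    intro t
    induction t using TensorProduct.induction_on with
    | zero => exact W.zero_mem
    | tmul k x =>
      have hx : φ x ∈ W := by
        have : x ∈ M := h ▸ Submodule.mem_top
        exact this
      have he : k ⊗ₜ[R] x = k • ((1 : K) ⊗ₜ[R] x) := by
        rw [TensorProduct.smul_tmul', smul_eq_mul, mul_one]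
      rw [he]
      exact W.smul_mem k hx
    | add a b ha hb => exact W.add_mem ha hb
  -- the quotient
  haveI hNfin : Module.Finite R (L ⧸ M) :=
    Module.Finite.of_surjective M.mkQ (Submodule.mkQ_surjective M)
  haveI hNnt : Nontrivial (L ⧸ M) :=
    (Submodule.Quotient.nontrivial_iff (p := M)).mpr (Ne.lt_top hMtop).ne
  have hNtf : ∀ (r : R), r ≠ 0 → ∀ n : (L ⧸ M), r • n = 0 → n = 0 := by
    intro r hr n hn
    obtain ⟨x, rfl⟩ := Submodule.mkQ_surjective M n
    rw [← map_smul, Submodule.mkQ_apply, Submodule.Quotient.mk_eq_zero] at hn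
    rw [Submodule.mkQ_apply, Submodule.Quotient.mk_eq_zero]
    exact hsat r hr x hn
  -- a nonzero coordinate of m
  set b := Module.Free.chooseBasis R L with hbdef
  have hrepr : b.repr m ≠ 0 := fun h => hm0 (by simpa using b.repr.map_eq_zero_iff.mp h)
  obtain ⟨i0, hi0⟩ := Finsupp.ne_iff.mp hrepr
  set c : R := b.repr m i0 with hcdef
  have hc : c ≠ 0 := by simpa using hi0
  -- finiteness of bad primes
  have hqfin : (Ideal.span {c}).minimalPrimes.Finite := by
    rw [Ideal.minimalPrimes_eq_comap]
    exact (minimalPrimes.finite_of_isNoetherianRing _).image _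
  -- there is a good prime avoiding c
  have hex : ∃ p : Ideal R, (∃ hp : p.IsPrime, p ≠ ⊥ ∧
      (∀ q : Ideal R, q.IsPrime → q < p → q = ⊥) ∧
      IsResiduallyIrreducible ρ p hp) ∧ c ∉ p := by
    by_contra h
    push_neg at h
    refine hinf (hqfin.subset ?_)
    rintro p ⟨hpP, hpbot, hpht, hpirr⟩
    have hcp : c ∈ p := h p ⟨hpP, hpbot, hpht, hpirr⟩
    refine ⟨⟨hpP, Ideal.span_le.mpr (Set.singleton_subset_iff.mpr hcp)⟩, ?_⟩
    intro q hq hqle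
    rcases eq_or_lt_of_le hqle with rfl | hlt
    · exact le_rfl
    · exfalso
      have hqbot : q = ⊥ := hpht q hq.1 hlt
      have : c ∈ q := hq.2 (Ideal.subset_span rfl)
      rw [hqbot] at this
      exact hc (Ideal.mem_bot.mp this)
  obtain ⟨p, ⟨hpP, hpbot, hpht, hpirr⟩, hcp⟩ := hex
  haveI := hpP
  set A := Localization.AtPrime p with hAdef
  set F := IsLocalRing.ResidueField A with hFdef
  -- algebraMap R F kills exactly p
  have halgF : algebraMap R F c ≠ 0 := by
    intro h
    apply hcp
    rw [IsScalarTower.algebraMap_apply R A F, IsLocalRing.ResidueField.algebraMap_eq] at h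
    have h' : algebraMap R A c ∈ IsLocalRing.maximalIdeal A :=
      Ideal.Quotient.eq_zero_iff_mem.mp h
    exact (IsLocalization.AtPrime.to_map_mem_maximal_iff A p c).mp h'
  set ψ : L →ₗ[R] TensorProduct R F L := TensorProduct.mk R F L 1 with hψdef
  set Wb : Submodule F (TensorProduct R F L) := Submodule.span F (ψ '' (M : Set L)) with hWbdef
  have hWbinv : ∀ g : G, ∀ x ∈ Wb, LinearMap.baseChange F (ρ g) x ∈ Wb := by
    intro g x hx
    have hmap : Wb.map (LinearMap.baseChange F (ρ g)) ≤ Wb := by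
      rw [hWbdef, Submodule.map_span]
      apply Submodule.span_mono
      rintro _ ⟨_, ⟨y, hy, rfl⟩, rfl⟩
      exact ⟨ρ g y, hMinv g y hy, by simp [hψdef]⟩
    exact hmap (Submodule.mem_map_of_mem hx)
  rcases hpirr Wb hWbinv with hbot | htop
  · -- Wb = ⊥ is impossible since ψ m ∈ Wb is nonzero
    have hmem : ψ m ∈ Wb := Submodule.subset_span ⟨m, hmM, rfl⟩
    rw [hbot, Submodule.mem_bot] at hmem
    apply halgF
    have h1 : (LinearMap.baseChange F (b.coord i0)) (ψ m) = (1 : F) ⊗ₜ[R] c := by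
      simp [hψdef, hcdef]
    rw [hmem, map_zero] at h1
    have h2 := congrArg (TensorProduct.rid R F) h1.symm
    rw [map_zero, TensorProduct.rid_tmul] at h2
    rw [← h2, Algebra.algebraMap_eq_smul_one]
  · -- Wb = ⊤ is impossible: Wb lies in the kernel of the base change of mkQ,
    -- which is surjective onto the nontrivial module F ⊗ (L ⧸ M)
    -- first: F ⊗[R] (L ⧸ M) is nontrivial
    set χ : (L ⧸ M) →ₗ[R] TensorProduct R A (L ⧸ M) := TensorProduct.mk R A (L ⧸ M) 1 with hχdef
    haveI hlocN : IsLocalizedModule p.primeCompl χ :=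
      (isLocalizedModule_iff_isBaseChange p.primeCompl A χ).mpr
        (TensorProduct.isBaseChange R (L ⧸ M) A)
    obtain ⟨n, hn0⟩ := exists_ne (0 : L ⧸ M)
    have hχn : χ n ≠ 0 := by
      intro h
      obtain ⟨s', hs'⟩ := (IsLocalizedModule.eq_zero_iff p.primeCompl χ).mp h
      have hs'0 : (s' : R) ≠ 0 := by
        intro h0
        exact s'.2 (h0 ▸ p.zero_mem)
      exact hn0 (hNtf _ hs'0 n hs')
    haveI hANnt : Nontrivial (TensorProduct R A (L ⧸ M)) := nontrivial_of_ne _ _ hχn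
    haveI : Module.Finite A (TensorProduct R A (L ⧸ M)) := inferInstance
    haveI hFNnt' : Nontrivial (TensorProduct A F (TensorProduct R A (L ⧸ M))) := by
      rw [← not_subsingleton_iff_nontrivial] at hANnt ⊢
      exact fun h => hANnt ((IsLocalRing.subsingleton_tensorProduct (R := A)).mp h)
    haveI hFNnt : Nontrivial (TensorProduct R F (L ⧸ M)) := by
      have e := TensorProduct.AlgebraTensorModule.cancelBaseChange R A F F (L ⧸ M)
      exact e.symm.toEquiv.nontrivial
    -- now derive the contradiction
    set q : TensorProduct R F L →ₗ[F] TensorProduct R F (L ⧸ M) :=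
      LinearMap.baseChange F M.mkQ with hqdef
    have hker : Wb ≤ LinearMap.ker q := by
      rw [hWbdef, Submodule.span_le]
      rintro _ ⟨y, hy, rfl⟩
      rw [SetLike.mem_coe, LinearMap.mem_ker]
      have : M.mkQ y = 0 := by
        rw [Submodule.mkQ_apply, Submodule.Quotient.mk_eq_zero]
        exact hy
      simp [hqdef, hψdef, this]
    have hq0 : q = 0 := by
      rw [← LinearMap.ker_eq_top]
      exact top_le_iff.mp (htop ▸ hker)
    have hqsurj : Function.Surjective q := by
      have : (q : TensorProduct R F L → TensorProduct R F (L ⧸ M)) = M.mkQ.lTensor F :=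
        LinearMap.baseChange_eq_ltensor M.mkQ
      rw [this]
      exact LinearMap.lTensor_surjective F (Submodule.mkQ_surjective M)
    obtain ⟨u, v, huv⟩ := hFNnt
    obtain ⟨x, rfl⟩ := hqsurj u
    obtain ⟨y, rfl⟩ := hqsurj v
    rw [hq0] at huv
    exact huv rfl
end

section
/- Let R be a local noetherian integral domain with maximal ideal m and fraction field K, let G be a group, and let L be a free R-module of finite rank d ≥ 1 with a representation ρ_L : G → Aut_R(L); set V := L ⊗_R K with the induced representation ρ_V. Suppose that the reduced representation ρ̄_{L,m} of G on the R/m-vector space L/mL is irreducible, and that there exists a set S of prime ideals of R such that (i) ⋂_{p∈S} p = (0) and (ii) R/p is a discrete valuation ring for every p ∈ S. Then ρ_V is irreducible. -/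
/-- `R/p` is a discrete valuation ring (where `p` is a prime ideal, so that `R/p` is a
domain). -/
def QuotientIsDVR {R : Type*} [CommRing R] (p : Ideal R) (hp : p.IsPrime) : Prop :=
  letI := hp
  IsDiscreteValuationRing (R ⧸ p)

open TensorProduct

set_option maxHeartbeats 1000000

/-- Proposition 3.7 of the paper. Let `R` be a local noetherian integral
domain with maximal ideal `m` and fraction field `K`, `G` a group, and `L` a free
`R`-module of finite rank `d ≥ 1` with a representation `ρ : G → Aut_R(L)`; set
`V := K ⊗_R L` with the induced representation `ρ_V`. Suppose the reduced representation
of `G` on the `R/m`-vector space `L/mL = (R/m) ⊗[R] L` is irreducible, and that there is a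
set `S` of prime ideals of `R` with `⋂_{p ∈ S} p = (0)` such that `R/p` is a discrete
valuation ring for every `p ∈ S`. Then `ρ_V` is irreducible. -/
theorem repn_irreducible_of_local_residual_irreducible_dvr_quotients
    (R : Type*) [CommRing R] [IsDomain R] [IsNoetherianRing R] [IsLocalRing R]
    (K : Type*) [Field K] [Algebra R K] [IsFractionRing R K]
    (G : Type*) [Group G]
    (L : Type*) [AddCommGroup L] [Module R L] [Module.Free R L] [Module.Finite R L]
    [Nontrivial L]
    (ρ : Representation R G L)
    (hirr : ∀ W : Submodule (IsLocalRing.ResidueField R)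
        (TensorProduct R (IsLocalRing.ResidueField R) L),
      (∀ g : G, ∀ x ∈ W, LinearMap.baseChange (IsLocalRing.ResidueField R) (ρ g) x ∈ W) →
      W = ⊥ ∨ W = ⊤)
    (S : Set (Ideal R))
    (hSprime : ∀ p ∈ S, p.IsPrime)
    (hSint : sInf S = ⊥)
    (hSdvr : ∀ p ∈ S, ∀ hp : p.IsPrime, QuotientIsDVR p hp) :
    ∀ W : Submodule K (TensorProduct R K L),
      (∀ g : G, ∀ x ∈ W, LinearMap.baseChange K (ρ g) x ∈ W) → W = ⊥ ∨ W = ⊤ := by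
  classical
  intro W hW
  by_contra hcon
  push_neg at hcon
  obtain ⟨hWbot, hWtop⟩ := hcon
  set k := IsLocalRing.ResidueField R with hk
  let I := Module.Free.ChooseBasisIndex R L
  let b : Module.Basis I R L := Module.Free.chooseBasis R L
  let ι : L →ₗ[R] TensorProduct R K L := TensorProduct.mk R K L 1
  haveI hloc : IsLocalizedModule (nonZeroDivisors R) ι :=
    (isLocalizedModule_iff_isBaseChange (nonZeroDivisors R) K ι).mpr
      (TensorProduct.isBaseChange R L K)
  let M : Submodule R L := (W.restrictScalars R).comap ι
  have hιρ : ∀ (g : G) (x : L), ι (ρ g x) = LinearMap.baseChange K (ρ g) (ι x) := by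
    intro g x
    simp [ι]
  have hMstab : ∀ g, ∀ x ∈ M, ρ g x ∈ M := by
    intro g x hx
    show ι (ρ g x) ∈ W
    rw [hιρ]
    exact hW g _ hx
  -- a nonzero element of M
  obtain ⟨w, hwW, hw0⟩ := Submodule.ne_bot_iff W |>.mp hWbot
  obtain ⟨⟨x, s⟩, hxs⟩ := IsLocalizedModule.surj (nonZeroDivisors R) ι w
  have hxM : x ∈ M := by
    show ι x ∈ W
    rw [← hxs, Submonoid.smul_def]
    exact W.smul_of_tower_mem (s : R) hwW
  have hx0 : x ≠ 0 := by
    rintro rfl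
    rw [map_zero, Submonoid.smul_def, ← algebraMap_smul K (s : R) w] at hxs
    rcases smul_eq_zero.mp hxs with h | h
    · exact nonZeroDivisors.coe_ne_zero s (IsFractionRing.injective R K (by simpa using h))
    · exact hw0 h
  obtain ⟨j0, hbj⟩ : ∃ j, b.repr x j ≠ 0 := by
    by_contra h
    push_neg at h
    apply hx0
    have : b.repr x = 0 := Finsupp.ext h
    simpa [this] using (b.repr.symm_apply_apply x).symm
  -- a functional vanishing on W
  obtain ⟨f, hf0, hfW⟩ := Submodule.exists_dual_map_eq_bot_of_lt_top
    (lt_top_iff_ne_top.mpr hWtop) inferInstance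
  let φ₀ : L →ₗ[R] K := (f.restrictScalars R).comp ι
  have hφ₀M : ∀ y ∈ M, φ₀ y = 0 := by
    intro y hy
    have : f (ι y) ∈ W.map f := Submodule.mem_map_of_mem hy
    rw [hfW] at this
    exact (Submodule.mem_bot K).mp this
  have hφ₀ne : ∃ i, φ₀ (b i) ≠ 0 := by
    by_contra h
    push_neg at h
    have hz : φ₀ = 0 := b.ext (fun i => by simp [h i])
    apply hf0
    apply LinearMap.ext
    intro v
    obtain ⟨⟨u, s'⟩, hus⟩ := IsLocalizedModule.surj (nonZeroDivisors R) ι v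
    have h1 : f (ι u) = 0 := by
      have : φ₀ u = 0 := by rw [hz]; rfl
      simpa [φ₀] using this
    have h2 : (algebraMap R K (s' : R)) • f v = 0 := by
      rw [algebraMap_smul, ← LinearMap.map_smul_of_tower, ← Submonoid.smul_def, hus, h1]
    rcases smul_eq_zero.mp h2 with h | h
    · exact absurd (IsFractionRing.injective R K (by simpa using h))
        (nonZeroDivisors.coe_ne_zero s')
    · simpa using h
  obtain ⟨r, hr⟩ := IsLocalization.exist_integer_multiples_of_finite
    (nonZeroDivisors R) (fun i : I => φ₀ (b i))
  choose c hc using hr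
  let φ : L →ₗ[R] R := b.constr R c
  have hφb : ∀ i, φ (b i) = c i := fun i => b.constr_basis R c i
  have key : ∀ y, algebraMap R K (φ y) = (r : R) • φ₀ y := by
    have : (Algebra.linearMap R K).comp φ = (r : R) • φ₀ := by
      apply b.ext
      intro i
      simp only [LinearMap.comp_apply, Algebra.linearMap_apply, hφb, LinearMap.smul_apply]
      exact hc i
    intro y
    exact LinearMap.congr_fun this y
  have hφM : ∀ y ∈ M, φ y = 0 := by
    intro y hy
    apply IsFractionRing.injective R K
    rw [key y, hφ₀M y hy, smul_zero, map_zero]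
  obtain ⟨i0, hc0⟩ : ∃ i, c i ≠ 0 := by
    obtain ⟨i, hi⟩ := hφ₀ne
    refine ⟨i, fun h => hi ?_⟩
    have := hc i
    rw [h, map_zero, Algebra.smul_def] at this
    rcases mul_eq_zero.mp this.symm with h' | h'
    · exact absurd (IsFractionRing.injective R K (by simpa using h'))
        (nonZeroDivisors.coe_ne_zero r)
    · exact h'
  -- choose the prime p
  obtain ⟨p, hpS, hpmem⟩ : ∃ p ∈ S, c i0 * b.repr x j0 ∉ p := by
    by_contra h
    push_neg at h
    have : c i0 * b.repr x j0 ∈ sInf S := Submodule.mem_sInf.mpr (fun p hp => h p hp)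
    rw [hSint] at this
    exact mul_ne_zero hc0 hbj (by simpa using this)
  haveI hp : p.IsPrime := hSprime p hpS
  haveI hdvr : IsDiscreteValuationRing (R ⧸ p) := hSdvr p hpS hp
  have hcp : c i0 ∉ p := fun h => hpmem (p.mul_mem_right _ h)
  have hbp : b.repr x j0 ∉ p := fun h => hpmem (p.mul_mem_left _ h)
  -- the quotient D = R/p and reduction machinery
  obtain ⟨π, hπ⟩ := IsDiscreteValuationRing.exists_irreducible (R ⧸ p)
  have hπmax : IsLocalRing.maximalIdeal (R ⧸ p) = Ideal.span {π} := hπ.maximalIdeal_eq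
  have hπ0 : π ≠ 0 := hπ.ne_zero
  let ιp : L →ₗ[R] TensorProduct R (R ⧸ p) L := TensorProduct.mk R (R ⧸ p) L 1
  let Mp : Submodule (R ⧸ p) (TensorProduct R (R ⧸ p) L) :=
    Submodule.span (R ⧸ p) (ιp '' (M : Set L))
  let N : Submodule (R ⧸ p) (TensorProduct R (R ⧸ p) L) :=
    { carrier := {y | ∃ a : R ⧸ p, a ≠ 0 ∧ a • y ∈ Mp}
      add_mem' := by
        rintro y z ⟨a, ha, hay⟩ ⟨a', ha', ha'z⟩
        refine ⟨a * a', mul_ne_zero ha ha', ?_⟩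
        rw [smul_add]
        exact Mp.add_mem (by rw [mul_comm, mul_smul]; exact Mp.smul_mem _ hay)
          (by rw [mul_smul]; exact Mp.smul_mem _ ha'z)
      zero_mem' := ⟨1, one_ne_zero, by simp⟩
      smul_mem' := by
        rintro d y ⟨a, ha, hay⟩
        exact ⟨a, ha, by rw [smul_comm]; exact Mp.smul_mem d hay⟩ }
  have hMpN : Mp ≤ N := fun y hy => ⟨1, one_ne_zero, by simpa using hy⟩
  have hNsat : ∀ (a : R ⧸ p), a ≠ 0 → ∀ y, a • y ∈ N → y ∈ N := by
    rintro a ha y ⟨a', ha', h⟩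
    exact ⟨a' * a, mul_ne_zero ha' ha, by rwa [mul_smul]⟩
  have hMpstab : ∀ g, ∀ y ∈ Mp, LinearMap.baseChange (R ⧸ p) (ρ g) y ∈ Mp := by
    intro g y hy
    induction hy using Submodule.span_induction with
    | mem y hy =>
      obtain ⟨z, hz, rfl⟩ := hy
      refine Submodule.subset_span ⟨ρ g z, hMstab g z hz, ?_⟩
      simp [ιp]
    | zero => simp
    | add y z hy hz ihy ihz => rw [map_add]; exact Mp.add_mem ihy ihz
    | smul a y hy ih => rw [map_smul]; exact Mp.smul_mem a ih
  have hNstab : ∀ g, ∀ y ∈ N, LinearMap.baseChange (R ⧸ p) (ρ g) y ∈ N := by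
    rintro g y ⟨a, ha, hay⟩
    exact ⟨a, ha, by rw [← map_smul]; exact hMpstab g _ hay⟩
  -- the element x is nonzero in the reduction
  have hxp : ιp x ≠ 0 := by
    intro h
    apply hbp
    have := (b.baseChange (R ⧸ p)).repr.congr_arg h
    have h2 : (b.baseChange (R ⧸ p)).repr (ιp x) j0 = 0 := by rw [h]; simp
    rw [show ιp x = (1 : R ⧸ p) ⊗ₜ[R] x from rfl, Module.Basis.baseChange_repr_tmul] at h2
    have h3 : algebraMap R (R ⧸ p) ((b.repr x) j0) = 0 := by
      rw [Algebra.algebraMap_eq_smul_one]; exact h2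
    rw [← Ideal.Quotient.eq_zero_iff_mem, ← Ideal.Quotient.algebraMap_eq]
    exact h3
  -- the reduction map to the residue field
  have hple : p ≤ IsLocalRing.maximalIdeal R := IsLocalRing.le_maximalIdeal hp.ne_top
  let θ : (R ⧸ p) →+* k := Ideal.Quotient.factor hple
  have hθsurj : Function.Surjective θ := by
    intro z
    obtain ⟨a, rfl⟩ := Ideal.Quotient.mk_surjective z
    exact ⟨Ideal.Quotient.mk p a, Ideal.Quotient.factor_mk _ _⟩
  have hθker : RingHom.ker θ = IsLocalRing.maximalIdeal (R ⧸ p) :=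
    IsLocalRing.ker_eq_maximalIdeal θ hθsurj
  let θₗ : (R ⧸ p) →ₗ[R] k :=
    { toFun := θ
      map_add' := map_add θ
      map_smul' := by
        intro r' a
        simp only [RingHom.id_apply]
        rw [Algebra.smul_def, map_mul, Algebra.smul_def]
        congr 1 }
  let red : TensorProduct R (R ⧸ p) L →ₗ[R] TensorProduct R k L := LinearMap.rTensor L θₗ
  have redι : ∀ z : L, red (ιp z) = (TensorProduct.mk R k L 1) z := by
    intro z
    show (θ 1) ⊗ₜ[R] z = (1 : k) ⊗ₜ[R] z
    rw [map_one]
  have redsmul : ∀ (a : R ⧸ p) y, red (a • y) = θ a • red y := by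
    intro a y
    induction y using TensorProduct.induction_on with
    | zero => simp
    | tmul d z =>
      rw [smul_tmul']
      show (θ (a * d)) ⊗ₜ[R] z = θ a • (θ d) ⊗ₜ[R] z
      rw [map_mul, smul_tmul', smul_eq_mul]
    | add u v hu hv => rw [smul_add, map_add, hu, hv, map_add, smul_add]
  have redρ : ∀ (g : G) y, red (LinearMap.baseChange (R ⧸ p) (ρ g) y)
      = LinearMap.baseChange k (ρ g) (red y) := by
    intro g y
    induction y using TensorProduct.induction_on with
    | zero => simp
    | tmul d z => rfl
    | add u v hu hv => simp only [map_add, hu, hv]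
  -- coordinates commute with reduction
  have hcoordk : ∀ y i, (b.baseChange k).repr (red y) i = θ ((b.baseChange (R ⧸ p)).repr y i) := by
    intro y i
    induction y using TensorProduct.induction_on with
    | zero => simp
    | tmul d z =>
      show (b.baseChange k).repr ((θ d) ⊗ₜ[R] z) i = _
      rw [Module.Basis.baseChange_repr_tmul, Module.Basis.baseChange_repr_tmul]
      exact (θₗ.map_smul (b.repr z i) d).symm
    | add u v hu hv => rw [map_add, map_add, Finsupp.add_apply, map_add, Finsupp.add_apply,
        map_add, hu, hv]
  -- kernel of the reduction map
  have hker : ∀ y, red y = 0 → ∃ v, y = π • v := by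
    intro y hy
    have hcoef : ∀ i, ∃ u, (b.baseChange (R ⧸ p)).repr y i = π * u := by
      intro i
      have h1 : θ ((b.baseChange (R ⧸ p)).repr y i) = 0 := by
        rw [← hcoordk, hy]; simp
      have h2 : (b.baseChange (R ⧸ p)).repr y i ∈ RingHom.ker θ := h1
      rw [hθker, hπmax, Ideal.mem_span_singleton] at h2
      obtain ⟨u, hu⟩ := h2
      exact ⟨u, hu⟩
    choose u hu using hcoef
    refine ⟨Finset.univ.sum (fun i => u i • (b.baseChange (R ⧸ p)) i), ?_⟩
    conv_lhs => rw [← (b.baseChange (R ⧸ p)).sum_repr y]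
    rw [Finset.smul_sum]
    apply Finset.sum_congr rfl
    intro i _
    rw [hu i, mul_smul]
  -- the span of the reduction of N
  let Nk : Submodule k (TensorProduct R k L) := Submodule.span k (red '' (N : Set _))
  have hNkstab : ∀ g, ∀ v ∈ Nk, LinearMap.baseChange k (ρ g) v ∈ Nk := by
    intro g v hv
    induction hv using Submodule.span_induction with
    | mem y hy =>
      obtain ⟨n, hn, rfl⟩ := hy
      rw [← redρ]
      exact Submodule.subset_span ⟨_, hNstab g n hn, rfl⟩
    | zero => rw [map_zero]; exact Nk.zero_mem
    | add y z hy hz ihy ihz => rw [map_add]; exact Nk.add_mem ihy ihz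
    | smul a y hy ih => rw [map_smul]; exact Nk.smul_mem a ih
  haveI : Module.Finite (R ⧸ p) (TensorProduct R (R ⧸ p) L) := inferInstance
  have hjac : Ideal.span {π} ≤ Ideal.jacobson (⊥ : Ideal (R ⧸ p)) := by
    rw [← hπmax]
    exact IsLocalRing.maximalIdeal_le_jacobson ⊥
  rcases hirr Nk hNkstab with hNkbot | hNktop
  · -- case Nk = ⊥ : N is torsion-like, contradiction with ιp x ≠ 0
    have hNred0 : ∀ y ∈ N, red y = 0 := by
      intro y hy
      have : red y ∈ Nk := Submodule.subset_span ⟨y, hy, rfl⟩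
      rw [hNkbot] at this
      simpa using this
    have hNle : N ≤ (Ideal.span {π}) • N := by
      intro y hy
      obtain ⟨v, rfl⟩ := hker y (hNred0 y hy)
      exact Submodule.smul_mem_smul (Ideal.mem_span_singleton_self π) (hNsat π hπ0 v hy)
    have hN0 : N = ⊥ :=
      Submodule.eq_bot_of_le_smul_of_le_jacobson_bot (Ideal.span {π}) N
        (IsNoetherian.noetherian N) hNle hjac
    have hxN : ιp x ∈ N := hMpN (Submodule.subset_span ⟨x, hxM, rfl⟩)
    rw [hN0] at hxN
    exact hxp (by simpa using hxN)
  · -- case Nk = ⊤ : N = ⊤, contradiction with the functional φ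
    have hredN : ∀ v, v ∈ Nk → ∃ y ∈ N, red y = v := by
      intro v hv
      induction hv using Submodule.span_induction with
      | mem y hy => obtain ⟨n, hn, rfl⟩ := hy; exact ⟨n, hn, rfl⟩
      | zero => exact ⟨0, N.zero_mem, map_zero _⟩
      | add y z hy hz ihy ihz =>
        obtain ⟨n, hn, rfl⟩ := ihy
        obtain ⟨n', hn', rfl⟩ := ihz
        exact ⟨n + n', N.add_mem hn hn', map_add _ _ _⟩
      | smul a y hy ih =>
        obtain ⟨n, hn, rfl⟩ := ih
        obtain ⟨a', rfl⟩ := hθsurj a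
        exact ⟨a' • n, N.smul_mem a' hn, redsmul a' n⟩
    have hNtop : N = ⊤ := by
      have hQ : (⊤ : Submodule (R ⧸ p) (TensorProduct R (R ⧸ p) L ⧸ N))
          ≤ (Ideal.span {π}) • ⊤ := by
        rintro q -
        obtain ⟨z, rfl⟩ := N.mkQ_surjective q
        have : red z ∈ Nk := by rw [hNktop]; trivial
        obtain ⟨y, hy, hyz⟩ := hredN (red z) this
        have h0 : red (z - y) = 0 := by rw [map_sub, hyz, sub_self]
        obtain ⟨v, hv⟩ := hker _ h0
        have hz : z = y + π • v := by rw [← hv, add_sub_cancel]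
        have hy0 : N.mkQ y = 0 := (Submodule.Quotient.mk_eq_zero N).mpr hy
        rw [hz, map_add, hy0, zero_add, map_smul]
        exact Submodule.smul_mem_smul (Ideal.mem_span_singleton_self π) trivial
      have htopbot := Submodule.eq_bot_of_le_smul_of_le_jacobson_bot (Ideal.span {π})
        (⊤ : Submodule (R ⧸ p) (TensorProduct R (R ⧸ p) L ⧸ N))
        (IsNoetherian.noetherian ⊤) hQ hjac
      rw [eq_top_iff]
      intro z _
      have hz0 : N.mkQ z ∈ (⊥ : Submodule (R ⧸ p) (TensorProduct R (R ⧸ p) L ⧸ N)) := by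
        rw [← htopbot]; trivial
      have hz1 : N.mkQ z = 0 := by simpa using hz0
      exact (Submodule.Quotient.mk_eq_zero N).mp hz1
    -- contradiction using the functional φ
    let φD : TensorProduct R (R ⧸ p) L →ₗ[R ⧸ p] (R ⧸ p) :=
      LinearMap.liftBaseChange (R ⧸ p) ((Algebra.linearMap R (R ⧸ p)).comp φ)
    have hφD : ∀ y ∈ Mp, φD y = 0 := by
      intro y hy
      induction hy using Submodule.span_induction with
      | mem y hy =>
        obtain ⟨z, hz, rfl⟩ := hy
        show φD ((1 : R ⧸ p) ⊗ₜ[R] z) = 0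
        rw [LinearMap.liftBaseChange_tmul]
        simp [hφM z hz]
      | zero => simp
      | add y z hy hz ihy ihz => rw [map_add, ihy, ihz, add_zero]
      | smul a y hy ih => rw [map_smul, ih, smul_zero]
    have hbN : ιp (b i0) ∈ N := by rw [hNtop]; trivial
    obtain ⟨a, ha, haMp⟩ := hbN
    have h1 : φD (a • ιp (b i0)) = 0 := hφD _ haMp
    rw [map_smul] at h1
    have h2 : φD (ιp (b i0)) = Ideal.Quotient.mk p (c i0) := by
      show φD ((1 : R ⧸ p) ⊗ₜ[R] (b i0)) = _
      rw [LinearMap.liftBaseChange_tmul, one_smul]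
      show algebraMap R (R ⧸ p) (φ (b i0)) = _
      rw [hφb, Ideal.Quotient.algebraMap_eq]
    rw [h2, smul_eq_mul] at h1
    rcases mul_eq_zero.mp h1 with h | h
    · exact ha h
    · exact hcp (Ideal.Quotient.eq_zero_iff_mem.mp h)
end
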